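/- For every integer b ≥ 1, every y ∈ ℤ and every α ≥ 0, the b-bit phase-quantizer transition probabilities evaluated at phase θ = 0 satisfy the reflection symmetry W_{(2^{b−1}−y) mod 2^b}^{(b)}(α, 0) = W_{(2^{b−1}−1+y) mod 2^b}^{(b)}(α, 0). -/

import Mathlib

open MeasureTheory Real

noncomputable section

/-- Argument of a complex number taking values in `[0, 2π)`. -/
def arg2pi (z : ℂ) : ℝ := if 0 ≤ Complex.arg z then Complex.arg z else Complex.arg z + 2 * π

/-- The quantization sector `R_y` of a `b`-bit phase quantizer. -/
def sector (b y : ℕ) : Set ℂ :=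
  {z : ℂ | z ≠ 0 ∧ 2 * π * y / 2 ^ b ≤ arg2pi z ∧ arg2pi z < 2 * π * (y + 1) / 2 ^ b}

/-- Transition probability `W_y^{(b)}(α, θ)` of the `b`-bit phase-quantized Gaussian channel. -/
def W (b y : ℕ) (α θ : ℝ) : ℝ :=
  ∫ z in sector b y,
    (1 / π) *
      Real.exp (-(‖z - (Real.sqrt α : ℂ) * Complex.exp ((θ : ℂ) * Complex.I)‖ ^ 2))

/-- Transition probability with integer output index, understood modulo `2^b`. -/
def Wz (b : ℕ) (y : ℤ) (α θ : ℝ) : ℝ := W b ((y % (2 ^ b : ℤ)).toNat) α θ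

/-- `x ↦ -x log₂ x`, with the convention `0 log₂ 0 = 0`. -/
def nH (x : ℝ) : ℝ := -(x * Real.logb 2 x)

/-- Conditional output entropy `H(Y | U = √α e^{iθ})`. -/
def hEnt (b : ℕ) (α θ : ℝ) : ℝ := ∑ y ∈ Finset.range (2 ^ b), nH (W b y α θ)

/-- `W_y^{(b)}(u)` for a complex channel input `u`. -/
def Wu (b y : ℕ) (u : ℂ) : ℝ := W b y (‖u‖ ^ 2) (arg2pi u)

/-- Output probability `p_y` under input distribution `μ`. -/
def outP (b : ℕ) (μ : Measure ℂ) (y : ℕ) : ℝ := ∫ u, Wu b y u ∂μ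

/-- Mutual information of the `b`-bit phase-quantized Gaussian channel with input law `μ`. -/
def mutInfo (b : ℕ) (μ : Measure ℂ) : ℝ :=
  (∑ y ∈ Finset.range (2 ^ b), nH (outP b μ y)) -
    ∫ u, ∑ y ∈ Finset.range (2 ^ b), nH (Wu b y u) ∂μ

/-- Rotation of the complex plane by the angle `2π/2^b`. -/
def rot (b : ℕ) : ℂ → ℂ := fun u => Complex.exp (((2 * π / 2 ^ b : ℝ) : ℂ) * Complex.I) * u

/-- A measure on `ℂ` is `2π/2^b`-symmetric if it is invariant under rotation by `2π/2^b`. -/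
def RotSymm (b : ℕ) (μ : Measure ℂ) : Prop := Measure.map (rot b) μ = μ


-- auxiliary lemmas

lemma arg2pi_nonneg (z : ℂ) : 0 ≤ arg2pi z := by
  unfold arg2pi
  split_ifs with h
  · exact h
  · nlinarith [Complex.neg_pi_lt_arg z, Real.pi_pos]

lemma arg2pi_lt_two_pi (z : ℂ) : arg2pi z < 2 * π := by
  unfold arg2pi
  split_ifs with h
  · nlinarith [Complex.arg_le_pi z, Real.pi_pos]
  · nlinarith [not_le.mp h]

lemma arg2pi_eq_zero_iff (z : ℂ) : arg2pi z = 0 ↔ Complex.arg z = 0 := by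
  unfold arg2pi
  split_ifs with h
  · simp
  · constructor
    · intro hz
      nlinarith [Complex.neg_pi_lt_arg z, Real.pi_pos, not_le.mp h]
    · intro hz
      exact absurd (le_of_eq hz.symm) h

lemma arg2pi_conj (z : ℂ) (hz : Complex.arg z ≠ 0) :
    arg2pi ((starRingEnd ℂ) z) = 2 * π - arg2pi z := by
  have harg := Complex.arg_conj z
  unfold arg2pi
  rcases lt_trichotomy (Complex.arg z) 0 with h | h | h
  · -- arg z < 0, arg conj z = -arg z
    have hne : Complex.arg z ≠ π := by nlinarith [Real.pi_pos]
    rw [harg, if_neg hne]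
    rw [if_pos (by linarith), if_neg (not_le.mpr h)]
    ring
  · exact absurd h hz
  · -- arg z > 0
    by_cases hpi : Complex.arg z = π
    · rw [harg, if_pos hpi, if_pos (le_of_lt Real.pi_pos), if_pos (le_of_lt h), hpi]
      ring
    · rw [harg, if_neg hpi, if_neg (by simpa using not_le.mpr h), if_pos (le_of_lt h)]
      ring

lemma ray_null (c : ℝ) : volume {z : ℂ | arg2pi z = c} = 0 := by
  set e : ℂ := Complex.exp ((c : ℂ) * Complex.I) with he
  have hsub : {z : ℂ | arg2pi z = c} ⊆ (Submodule.span ℝ {e} : Submodule ℝ ℂ) := by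
    intro z hz
    simp only [Set.mem_setOf_eq] at hz
    rw [SetLike.mem_coe, Submodule.mem_span_singleton]
    refine ⟨‖z‖, ?_⟩
    have hz2 : Complex.exp ((Complex.arg z : ℂ) * Complex.I) = e := by
      unfold arg2pi at hz
      split_ifs at hz with h
      · rw [hz]
      · rw [he, ← hz]
        push_cast
        rw [add_mul, Complex.exp_add]
        simp [Complex.exp_two_pi_mul_I]
    have := Complex.norm_mul_exp_arg_mul_I z
    rw [hz2] at this
    simpa [Complex.real_smul] using this
  refine measure_mono_null hsub ?_
  apply Measure.addHaar_submodule
  intro htop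
  have h1 : Module.finrank ℝ (Submodule.span ℝ ({e} : Set ℂ)) = 1 :=
    finrank_span_singleton (Complex.exp_ne_zero _)
  rw [htop] at h1
  rw [finrank_top] at h1
  rw [Complex.finrank_real_complex] at h1
  exact absurd h1 (by norm_num)

lemma measurable_arg2pi : Measurable arg2pi := by
  unfold arg2pi
  exact Measurable.ite (measurableSet_le measurable_const Complex.measurable_arg)
    Complex.measurable_arg (Complex.measurable_arg.add_const _)

lemma measurableSet_sector (b y : ℕ) : MeasurableSet (sector b y) := by
  have : sector b y = {z : ℂ | z ≠ 0} ∩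
      arg2pi ⁻¹' Set.Ico (2 * π * y / 2 ^ b) (2 * π * (y + 1) / 2 ^ b) := by
    ext z; simp [sector, Set.mem_Ico, and_assoc]
  rw [this]
  exact ((measurableSet_singleton (0:ℂ)).compl).inter
    (measurable_arg2pi measurableSet_Ico)

lemma W_reflect (b y₁ y₂ : ℕ) (h : y₁ + y₂ + 1 = 2 ^ b) (α : ℝ) :
    W b y₁ α 0 = W b y₂ α 0 := by
  set f : ℂ → ℝ := fun z =>
    (1 / π) * Real.exp (-(‖z - (Real.sqrt α : ℂ) *
      Complex.exp (((0 : ℝ) : ℂ) * Complex.I)‖ ^ 2)) with hf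
  have hfconj : ∀ z : ℂ, f ((starRingEnd ℂ) z) = f z := by
    intro z
    have : ‖(starRingEnd ℂ) z - (Real.sqrt α : ℂ) *
        Complex.exp (((0 : ℝ) : ℂ) * Complex.I)‖ =
        ‖z - (Real.sqrt α : ℂ) * Complex.exp (((0 : ℝ) : ℂ) * Complex.I)‖ := by
      simp only [Complex.ofReal_zero, zero_mul, Complex.exp_zero, mul_one]
      rw [show (starRingEnd ℂ) z - ((Real.sqrt α : ℝ) : ℂ) =
        (starRingEnd ℂ) (z - ((Real.sqrt α : ℝ) : ℂ)) by
          rw [map_sub, Complex.conj_ofReal], Complex.norm_conj]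
    rw [hf]
    simp only [this]
  -- a.e. equality of sets
  have hN : (0:ℝ) < (2:ℝ) ^ b := by positivity
  have hae : sector b y₁ =ᵐ[volume] (starRingEnd ℂ) ⁻¹' (sector b y₂) := by
    rw [Filter.eventuallyEq_set]
    have hbad : volume ({z : ℂ | arg2pi z = 0} ∪ {z | arg2pi z = 2 * π * y₁ / 2 ^ b}
        ∪ {z | arg2pi z = 2 * π * (y₁ + 1) / 2 ^ b}) = 0 := by
      refine measure_union_null (measure_union_null ?_ ?_) ?_ <;> exact ray_null _
    filter_upwards [measure_eq_zero_iff_ae_notMem.mp hbad] with z hz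
    simp only [Set.mem_union, Set.mem_setOf_eq, not_or] at hz
    obtain ⟨⟨hz0, hzc1⟩, hzc2⟩ := hz
    have hzne : z ≠ 0 := by
      intro h0
      apply hz0
      rw [h0]
      simp [arg2pi_eq_zero_iff]
    have hargne : Complex.arg z ≠ 0 := fun h0 => hz0 ((arg2pi_eq_zero_iff z).mpr h0)
    have hconj := arg2pi_conj z hargne
    have hy2 : ((y₂ : ℝ) + 1) = 2 ^ b - y₁ := by
      have : ((y₁ : ℝ) + y₂ + 1) = 2 ^ b := by exact_mod_cast congrArg (Nat.cast (R := ℝ)) h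
      linarith
    have hy2' : (y₂ : ℝ) = 2 ^ b - (y₁ + 1) := by linarith
    have hc1 : 2 * π - 2 * π * ((y₂ : ℝ) + 1) / 2 ^ b = 2 * π * y₁ / 2 ^ b := by
      field_simp [hy2]; linarith
    have hc2 : 2 * π - 2 * π * (y₂ : ℝ) / 2 ^ b = 2 * π * (y₁ + 1) / 2 ^ b := by
      field_simp [hy2']; linarith
    simp only [sector, Set.mem_preimage, Set.mem_setOf_eq]
    constructor
    · rintro ⟨-, h1, h2⟩
      refine ⟨by simpa using hzne, ?_, ?_⟩
      · rw [hconj]; linarith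
      · rw [hconj]; linarith [lt_of_le_of_ne h1 (Ne.symm hzc1)]
    · rintro ⟨-, h1, h2⟩
      rw [hconj] at h1 h2
      refine ⟨hzne, ?_, ?_⟩
      · linarith
      · have : arg2pi z ≤ 2 * π * ((y₁ : ℝ) + 1) / 2 ^ b := by linarith
        exact lt_of_le_of_ne this hzc2
  calc W b y₁ α 0 = ∫ z in (starRingEnd ℂ) ⁻¹' (sector b y₂), f z := by
        rw [W]; exact setIntegral_congr_set hae
    _ = ∫ z in (starRingEnd ℂ) ⁻¹' (sector b y₂), f ((starRingEnd ℂ) z) := by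
        refine setIntegral_congr_fun ?_ (fun z _ => (hfconj z).symm)
        exact (Complex.continuous_conj.measurable) (measurableSet_sector b y₂)
    _ = ∫ z in sector b y₂, f z := by
        exact Complex.conjLIE.measurePreserving.setIntegral_preimage_emb
          Complex.conjLIE.toMeasurableEquiv.measurableEmbedding f _
    _ = W b y₂ α 0 := rfl


/-- reflection symmetry of the transition probabilities at `θ = 0`. -/
theorem stmt_2 (b : ℕ) (hb : 1 ≤ b) (y : ℤ) (α : ℝ) (hα : 0 ≤ α) :
    Wz b ((2 : ℤ) ^ (b - 1) - y) α 0 = Wz b ((2 : ℤ) ^ (b - 1) - 1 + y) α 0 := by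
  unfold Wz
  apply W_reflect
  -- arithmetic
  set n : ℤ := 2 ^ b with hn
  have h2 : (2:ℤ) ^ (b-1) + 2 ^ (b-1) = n := by
    obtain ⟨m, rfl⟩ : ∃ m, b = m + 1 := ⟨b - 1, by omega⟩
    simp only [hn, Nat.add_sub_cancel, pow_succ]
    ring
  have hn2 : (2:ℤ) ≤ n := by
    rw [hn]
    calc (2:ℤ) = 2^1 := by norm_num
    _ ≤ 2 ^ b := pow_le_pow_right₀ (by norm_num) hb
  set s : ℤ := 2 ^ (b-1) - y with hs
  set t : ℤ := 2 ^ (b-1) - 1 + y with ht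
  have hst : s + t = n - 1 := by rw [hs, ht]; linarith
  have h1 : s % n + t % n = n - 1 := by
    have e1 : s % n = s - n * (s / n) := Int.emod_def s n
    have e2 : t % n = t - n * (t / n) := Int.emod_def t n
    have b1 : 0 ≤ s % n := Int.emod_nonneg s (by omega)
    have b2 : s % n < n := Int.emod_lt_of_pos s (by omega)
    have b3 : 0 ≤ t % n := Int.emod_nonneg t (by omega)
    have b4 : t % n < n := Int.emod_lt_of_pos t (by omega)
    set k : ℤ := s / n + t / n with hk
    have : s % n + t % n = n - 1 - n * k := by
      rw [e1, e2, hk]; linear_combination hst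
    rcases lt_trichotomy k 0 with hk0 | hk0 | hk0
    · exfalso
      have hnk : n * k ≤ n * (-1) :=
        mul_le_mul_of_nonneg_left (by omega) (by omega)
      linarith
    · rw [hk0, mul_zero] at this; omega
    · exfalso
      have hnk : n * 1 ≤ n * k :=
        mul_le_mul_of_nonneg_left (by omega) (by omega)
      linarith
  have b1 : 0 ≤ s % n := Int.emod_nonneg s (by omega)
  have b3 : 0 ≤ t % n := Int.emod_nonneg t (by omega)
  have hcast : ((2:ℤ)^b) = ((2^b : ℕ) : ℤ) := by push_cast; ring
  omega


end
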